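/- Let g be a Lie algebra over a field k, let n ≥ 2, and let r : g → n_n(k) be a wide homomorphism. Then the commutant of r in the strictly upper triangular matrices is exactly the line spanned by the matrix unit E_{1,n}: {A ∈ n_n(k) : A·r(v) = r(v)·A for all v ∈ g} = k·E_{1,n}. -/

import Mathlib

attribute [local instance 100] LieRing.ofAssociativeRing

/-- Let `r : g → n_n(k)` be a wide homomorphism with `n ≥ 2`.  Then the
commutant of `r` in the strictly upper triangular matrices is exactly the line spanned by the
matrix unit `E_{1,n}`. -/
theorem stmt_11 {k : Type*} [Field k] {g : Type*} [LieRing g] [LieAlgebra k g] {n : ℕ}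
    (hn : 2 ≤ n)
    (r : g →ₗ⁅k⁆ Matrix (Fin n) (Fin n) k)
    (hr : ∀ (v : g) (i j : Fin n), j ≤ i → r v i j = 0)
    (hflag : ∀ (i : ℕ) (hi : i + 1 < n), ∃ v : g, r v ⟨i, by omega⟩ ⟨i + 1, hi⟩ ≠ 0)
    (hwide : ∀ (i j : ℕ) (hi : i + 1 < n) (hj : j + 1 < n), i ≠ j →
      ∀ a b : k,
        (∀ v : g,
          a * r v ⟨i, by omega⟩ ⟨i + 1, hi⟩ + b * r v ⟨j, by omega⟩ ⟨j + 1, hj⟩ = 0) →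
        a = 0 ∧ b = 0) :
    {A : Matrix (Fin n) (Fin n) k |
        (∀ i j : Fin n, j ≤ i → A i j = 0) ∧ ∀ v : g, A * r v = r v * A} =
      {A : Matrix (Fin n) (Fin n) k | ∃ c : k,
        A = c • Matrix.single (⟨0, by omega⟩ : Fin n) (⟨n - 1, by omega⟩ : Fin n)
          (1 : k)} := by
  ext A
  simp only [Set.mem_setOf_eq]
  constructor
  · rintro ⟨hA1, hA2⟩
    -- Key induction: entries within distance `d` of the diagonal vanish, for `d ≤ n - 2`.
    have key : ∀ d : ℕ, d ≤ n - 2 → ∀ i j : Fin n, (j : ℕ) ≤ (i : ℕ) + d → A i j = 0 := by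
      intro d
      induction d with
      | zero =>
        intro _ i j hij
        exact hA1 i j (Fin.le_def.mpr (by omega))
      | succ d ih =>
        intro hd i j hij
        by_cases hle : (j : ℕ) ≤ (i : ℕ) + d
        · exact ih (by omega) i j hle
        · have hj : (j : ℕ) = (i : ℕ) + d + 1 := by omega
          have hdn : d + 3 ≤ n := by omega
          -- the main step, done at a shifted index `i0`
          have main : ∀ (i0 : ℕ) (hi0 : i0 + d + 2 < n),
              A ⟨i0, by omega⟩ ⟨i0 + d + 1, by omega⟩ = 0 ∧
              A ⟨i0 + 1, by omega⟩ ⟨i0 + d + 2, hi0⟩ = 0 := by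
            intro i0 hi0
            have hsum : ∀ v : g,
                A ⟨i0, by omega⟩ ⟨i0 + d + 1, by omega⟩ *
                  r v ⟨i0 + d + 1, by omega⟩ ⟨i0 + d + 2, hi0⟩ +
                (-A ⟨i0 + 1, by omega⟩ ⟨i0 + d + 2, hi0⟩) *
                  r v ⟨i0, by omega⟩ ⟨i0 + 1, by omega⟩ = 0 := by
              intro v
              have h := congrFun (congrFun (hA2 v) ⟨i0, by omega⟩) ⟨i0 + d + 2, hi0⟩
              rw [Matrix.mul_apply, Matrix.mul_apply] at h
              have hL : ∑ m : Fin n, A ⟨i0, by omega⟩ m * r v m ⟨i0 + d + 2, hi0⟩ =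
                  A ⟨i0, by omega⟩ ⟨i0 + d + 1, by omega⟩ *
                    r v ⟨i0 + d + 1, by omega⟩ ⟨i0 + d + 2, hi0⟩ := by
                apply Finset.sum_eq_single
                · intro m _ hm
                  by_cases hm' : (m : ℕ) ≤ i0 + d
                  · rw [ih (by omega) ⟨i0, by omega⟩ m
                      (show (m : ℕ) ≤ i0 + d from hm'), zero_mul]
                  · have hge : (m : ℕ) ≥ i0 + d + 2 := by
                      rcases Nat.lt_or_ge (m : ℕ) (i0 + d + 2) with h' | h'
                      · exact absurd (Fin.ext (show (m : ℕ) = i0 + d + 1 by omega)) hm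
                      · exact h'
                    rw [hr v m ⟨i0 + d + 2, hi0⟩
                      (show i0 + d + 2 ≤ (m : ℕ) from hge), mul_zero]
                · intro hmem; exact absurd (Finset.mem_univ _) hmem
              have hR : ∑ m : Fin n, r v ⟨i0, by omega⟩ m * A m ⟨i0 + d + 2, hi0⟩ =
                  r v ⟨i0, by omega⟩ ⟨i0 + 1, by omega⟩ *
                    A ⟨i0 + 1, by omega⟩ ⟨i0 + d + 2, hi0⟩ := by
                apply Finset.sum_eq_single
                · intro m _ hm
                  by_cases hm' : (m : ℕ) ≤ i0
                  · rw [hr v ⟨i0, by omega⟩ m (show (m : ℕ) ≤ i0 from hm'), zero_mul]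
                  · have hge : (m : ℕ) ≥ i0 + 2 := by
                      rcases Nat.lt_or_ge (m : ℕ) (i0 + 2) with h' | h'
                      · exact absurd (Fin.ext (show (m : ℕ) = i0 + 1 by omega)) hm
                      · exact h'
                    rw [ih (by omega) m ⟨i0 + d + 2, hi0⟩
                      (show i0 + d + 2 ≤ (m : ℕ) + d by omega), mul_zero]
                · intro hmem; exact absurd (Finset.mem_univ _) hmem
              rw [hL, hR] at h
              linear_combination h
            have := hwide (i0 + d + 1) i0 (by omega) (by omega) (by omega)
              (A ⟨i0, by omega⟩ ⟨i0 + d + 1, by omega⟩)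
              (-A ⟨i0 + 1, by omega⟩ ⟨i0 + d + 2, hi0⟩) hsum
            exact ⟨this.1, by simpa [neg_eq_zero] using this.2⟩
          by_cases hjn : (j : ℕ) + 1 < n
          · have := (main (i : ℕ) (by omega)).1
            convert this using 2 <;> exact Fin.ext (by simp only [Fin.val_mk]; omega)
          · -- j = n - 1, use shifted equation
            have hi1 : 1 ≤ (i : ℕ) := by omega
            have := (main ((i : ℕ) - 1) (by omega)).2
            convert this using 2 <;> exact Fin.ext (by simp only [Fin.val_mk]; omega)
    refine ⟨A ⟨0, by omega⟩ ⟨n - 1, by omega⟩, ?_⟩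
    ext i j
    simp only [Matrix.smul_apply, Matrix.single, Matrix.of_apply, smul_eq_mul]
    by_cases hij : (⟨0, by omega⟩ : Fin n) = i ∧ (⟨n - 1, by omega⟩ : Fin n) = j
    · rw [if_pos hij, ← hij.1, ← hij.2, mul_one]
    · rw [if_neg hij, mul_zero]
      apply key (n - 2) le_rfl
      have hne : ¬((i : ℕ) = 0 ∧ (j : ℕ) = n - 1) := by
        intro h; exact hij ⟨(Fin.ext h.1).symm, (Fin.ext h.2).symm⟩
      have hjlt : (j : ℕ) < n := j.isLt
      have hilt : (i : ℕ) < n := i.isLt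
      omega
  · rintro ⟨c, rfl⟩
    constructor
    · intro i j hij
      simp only [Matrix.smul_apply, Matrix.single, Matrix.of_apply, smul_eq_mul]
      rw [if_neg, mul_zero]
      rintro ⟨rfl, rfl⟩
      rw [Fin.mk_le_mk] at hij
      omega
    · intro v
      have h1 : Matrix.single (⟨0, by omega⟩ : Fin n) (⟨n - 1, by omega⟩ : Fin n)
          (1 : k) * r v = 0 := by
        ext a b
        rw [Matrix.zero_apply]
        by_cases ha : a = (⟨0, by omega⟩ : Fin n)
        · subst ha
          rw [Matrix.single_mul_apply_same,
            hr v ⟨n - 1, by omega⟩ b (show (b : ℕ) ≤ n - 1 from Nat.le_pred_of_lt b.isLt),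
            mul_zero]
        · exact Matrix.single_mul_apply_of_ne _ _ _ _ _ ha _
      have h2 : r v * Matrix.single (⟨0, by omega⟩ : Fin n) (⟨n - 1, by omega⟩ : Fin n)
          (1 : k) = 0 := by
        ext a b
        rw [Matrix.zero_apply]
        by_cases hb : b = (⟨n - 1, by omega⟩ : Fin n)
        · subst hb
          rw [Matrix.mul_single_apply_same,
            hr v a ⟨0, by omega⟩ (show (0 : ℕ) ≤ (a : ℕ) from Nat.zero_le _), zero_mul]
        · exact Matrix.mul_single_apply_of_ne _ _ _ _ _ hb _
      rw [smul_mul_assoc, mul_smul_comm, h1, h2]
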